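/- Let K be an algebraically closed field, T ≤ SL₂(K) the subgroup of diagonal matrices, and let S ⊆ SL₂(K) be the set S = {[[1, α],[1, 1+α]] : α ∈ K} ∪ {[[0,1],[−1,1]], [[0,1],[−1,0]], [[1,1],[0,1]], [[1,0],[0,1]]}. Then for every A ∈ SL₂(K) there is exactly one h ∈ S such that A = t₁ h t₂ for some t₁, t₂ ∈ T. (Thus S is a minimal set of representatives of the double cosets T\SL₂(K)/T.) -/

import Mathlib

open Matrix

/-- The diagonal torus `T ≤ SL₂(K)`. -/
def Tdiag (K : Type*) [Field K] : Set (SpecialLinearGroup (Fin 2) K) :=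
  {t | (t : Matrix (Fin 2) (Fin 2) K) 0 1 = 0 ∧ (t : Matrix (Fin 2) (Fin 2) K) 1 0 = 0}

/-- `g_α = [[1, α],[1, 1+α]] ∈ SL₂(K)`. -/
def gMat {K : Type*} [Field K] (α : K) : SpecialLinearGroup (Fin 2) K :=
  ⟨!![1, α; 1, 1 + α], by rw [Matrix.det_fin_two_of]; ring⟩

/-- `[[0,1],[-1,1]] ∈ SL₂(K)`. -/
def wOne (K : Type*) [Field K] : SpecialLinearGroup (Fin 2) K :=
  ⟨!![0, 1; -1, 1], by rw [Matrix.det_fin_two_of]; ring⟩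

/-- `[[0,1],[-1,0]] ∈ SL₂(K)`. -/
def wElt (K : Type*) [Field K] : SpecialLinearGroup (Fin 2) K :=
  ⟨!![0, 1; -1, 0], by rw [Matrix.det_fin_two_of]; ring⟩

/-- `[[1,1],[0,1]] ∈ SL₂(K)`. -/
def uOne (K : Type*) [Field K] : SpecialLinearGroup (Fin 2) K :=
  ⟨!![1, 1; 0, 1], by rw [Matrix.det_fin_two_of]; ring⟩

/-- diagonal element `diag(u, u⁻¹)` of `SL₂`. -/
def dElt {K : Type*} [Field K] (u : K) (hu : u ≠ 0) : SpecialLinearGroup (Fin 2) K :=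
  ⟨!![u, 0; 0, u⁻¹], by rw [Matrix.det_fin_two_of]; field_simp; ring⟩

lemma dElt_mem {K : Type*} [Field K] (u : K) (hu : u ≠ 0) : dElt u hu ∈ Tdiag K := by
  constructor <;> simp [dElt, Tdiag]

lemma sep {K : Type*} [Field K] (g g' : SpecialLinearGroup (Fin 2) K)
    (hg : g ∈ ({g | ∃ α : K, g = gMat α} ∪ {wOne K, wElt K, uOne K, 1} :
          Set (SpecialLinearGroup (Fin 2) K)))
    (hg' : g' ∈ ({g | ∃ α : K, g = gMat α} ∪ {wOne K, wElt K, uOne K, 1} :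
          Set (SpecialLinearGroup (Fin 2) K)))
    (e00 : (g : Matrix (Fin 2) (Fin 2) K) 0 0 = 0 ↔ (g' : Matrix (Fin 2) (Fin 2) K) 0 0 = 0)
    (e01 : (g : Matrix (Fin 2) (Fin 2) K) 0 1 = 0 ↔ (g' : Matrix (Fin 2) (Fin 2) K) 0 1 = 0)
    (e10 : (g : Matrix (Fin 2) (Fin 2) K) 1 0 = 0 ↔ (g' : Matrix (Fin 2) (Fin 2) K) 1 0 = 0)
    (e11 : (g : Matrix (Fin 2) (Fin 2) K) 1 1 = 0 ↔ (g' : Matrix (Fin 2) (Fin 2) K) 1 1 = 0)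
    (ep : (g : Matrix (Fin 2) (Fin 2) K) 0 1 * (g : Matrix (Fin 2) (Fin 2) K) 1 0
        = (g' : Matrix (Fin 2) (Fin 2) K) 0 1 * (g' : Matrix (Fin 2) (Fin 2) K) 1 0) :
    g = g' := by
  rcases hg with ⟨α, rfl⟩ | rfl | rfl | rfl | rfl <;>
    rcases hg' with ⟨β, rfl⟩ | rfl | rfl | rfl | rfl <;>
    simp_all [gMat, wOne, wElt, uOne] <;> rfl

lemma entry_mul {K : Type*} [Field K] (t₁ h t₂ : SpecialLinearGroup (Fin 2) K)
    (h₁ : t₁ ∈ Tdiag K) (h₂ : t₂ ∈ Tdiag K) (i j : Fin 2) :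
    ((t₁ * h * t₂ : SpecialLinearGroup (Fin 2) K) : Matrix (Fin 2) (Fin 2) K) i j
      = (t₁ : Matrix (Fin 2) (Fin 2) K) i i * (h : Matrix (Fin 2) (Fin 2) K) i j
        * (t₂ : Matrix (Fin 2) (Fin 2) K) j j := by
  obtain ⟨a1, b1⟩ := h₁
  obtain ⟨a2, b2⟩ := h₂
  fin_cases i <;> fin_cases j <;>
    simp [Matrix.SpecialLinearGroup.coe_mul, Matrix.mul_apply, Fin.sum_univ_two, a1, b1, a2, b2]

lemma Tdiag_det {K : Type*} [Field K] (t : SpecialLinearGroup (Fin 2) K) (ht : t ∈ Tdiag K) :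
    (t : Matrix (Fin 2) (Fin 2) K) 0 0 * (t : Matrix (Fin 2) (Fin 2) K) 1 1 = 1 := by
  have h := t.2
  rw [Matrix.det_fin_two] at h
  rw [ht.1] at h
  linear_combination h

lemma Tdiag_ne {K : Type*} [Field K] (t : SpecialLinearGroup (Fin 2) K) (ht : t ∈ Tdiag K)
    (i : Fin 2) : (t : Matrix (Fin 2) (Fin 2) K) i i ≠ 0 := by
  have h := Tdiag_det t ht
  intro h0
  have : (0 : K) = 1 := by
    fin_cases i
    · rw [show ((t : Matrix (Fin 2) (Fin 2) K) 0 0 = 0) from h0, zero_mul] at h; exact h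
    · rw [show ((t : Matrix (Fin 2) (Fin 2) K) 1 1 = 0) from h0, mul_zero] at h; exact h
  exact zero_ne_one this

/-- invariants of the double coset -/
lemma invariants {K : Type*} [Field K] (h t₁ t₂ : SpecialLinearGroup (Fin 2) K)
    (h₁ : t₁ ∈ Tdiag K) (h₂ : t₂ ∈ Tdiag K) :
    (∀ i j : Fin 2, (((t₁ * h * t₂ : SpecialLinearGroup (Fin 2) K) :
        Matrix (Fin 2) (Fin 2) K) i j = 0 ↔ (h : Matrix (Fin 2) (Fin 2) K) i j = 0)) ∧
    ((t₁ * h * t₂ : SpecialLinearGroup (Fin 2) K) : Matrix (Fin 2) (Fin 2) K) 0 1 *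
      ((t₁ * h * t₂ : SpecialLinearGroup (Fin 2) K) : Matrix (Fin 2) (Fin 2) K) 1 0
      = (h : Matrix (Fin 2) (Fin 2) K) 0 1 * (h : Matrix (Fin 2) (Fin 2) K) 1 0 := by
  constructor
  · intro i j
    rw [entry_mul t₁ h t₂ h₁ h₂]
    constructor
    · intro hz
      rcases mul_eq_zero.1 hz with hz | hz
      · rcases mul_eq_zero.1 hz with hz | hz
        · exact absurd hz (Tdiag_ne t₁ h₁ i)
        · exact hz
      · exact absurd hz (Tdiag_ne t₂ h₂ j)
    · intro hz; rw [hz]; ring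
  · rw [entry_mul t₁ h t₂ h₁ h₂, entry_mul t₁ h t₂ h₁ h₂]
    have d1 := Tdiag_det t₁ h₁
    have d2 := Tdiag_det t₂ h₂
    linear_combination ((h : Matrix (Fin 2) (Fin 2) K) 0 1 * (h : Matrix (Fin 2) (Fin 2) K) 1 0
      * (t₂ : Matrix (Fin 2) (Fin 2) K) 1 1 * (t₂ : Matrix (Fin 2) (Fin 2) K) 0 0) * d1 +
      ((h : Matrix (Fin 2) (Fin 2) K) 0 1 * (h : Matrix (Fin 2) (Fin 2) K) 1 0) * d2

/-- The set `S = {g_α : α ∈ K} ∪ {[[0,1],[-1,1]], [[0,1],[-1,0]], [[1,1],[0,1]], 1}` is a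
minimal set of representatives of the double cosets `T\SL₂(K)/T`. -/
theorem T_double_coset_reps {K : Type*} [Field K] [IsAlgClosed K]
    (A : SpecialLinearGroup (Fin 2) K) :
    ∃! h : SpecialLinearGroup (Fin 2) K,
      h ∈ ({g | ∃ α : K, g = gMat α} ∪ {wOne K, wElt K, uOne K, 1} :
          Set (SpecialLinearGroup (Fin 2) K)) ∧
      ∃ t₁ ∈ Tdiag K, ∃ t₂ ∈ Tdiag K, A = t₁ * h * t₂ := by
  have hdet : (A : Matrix (Fin 2) (Fin 2) K) 0 0 * (A : Matrix (Fin 2) (Fin 2) K) 1 1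
      - (A : Matrix (Fin 2) (Fin 2) K) 0 1 * (A : Matrix (Fin 2) (Fin 2) K) 1 0 = 1 := by
    have h := A.2
    rw [Matrix.det_fin_two] at h
    exact h
  set a := (A : Matrix (Fin 2) (Fin 2) K) 0 0 with ha'
  set b := (A : Matrix (Fin 2) (Fin 2) K) 0 1 with hb'
  set c := (A : Matrix (Fin 2) (Fin 2) K) 1 0 with hc'
  set d := (A : Matrix (Fin 2) (Fin 2) K) 1 1 with hd'
  clear_value a b c d
  -- existence of a representative
  have hex : ∃ h : SpecialLinearGroup (Fin 2) K,
      h ∈ ({g | ∃ α : K, g = gMat α} ∪ {wOne K, wElt K, uOne K, 1} :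
          Set (SpecialLinearGroup (Fin 2) K)) ∧
      ∃ t₁ ∈ Tdiag K, ∃ t₂ ∈ Tdiag K, A = t₁ * h * t₂ := by
    by_cases ha : a = 0
    · -- a = 0 : then b*c = -1, b ≠ 0
      have hbc : b * c = -1 := by rw [ha] at hdet; linear_combination -hdet
      have hb : b ≠ 0 := by
        intro h
        rw [h, zero_mul] at hbc
        exact one_ne_zero (by linear_combination hbc)
      by_cases hd : d = 0
      · -- wElt case
        refine ⟨wElt K, Or.inr (Or.inr (Or.inl rfl)), dElt b hb, dElt_mem _ _, 1,
          ⟨by simp, by simp⟩, ?_⟩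
        ext i j
        fin_cases i <;> fin_cases j <;>
          simp only [Matrix.SpecialLinearGroup.coe_mul] <;>
          simp [dElt, wElt, Matrix.mul_apply, Fin.sum_univ_two, ← ha', ← hb', ← hc', ← hd',
            ha, hd] <;>
          field_simp <;>
          first
            | linear_combination -hbc
            | linear_combination hbc
            | linear_combination 2 * hbc
            | linear_combination -2 * hbc
      · -- wOne case
        obtain ⟨u, hu⟩ := IsAlgClosed.exists_pow_nat_eq (b / d) zero_lt_two
        have hun : u ≠ 0 := by
          intro h
          rw [h] at hu
          apply hb
          field_simp at hu
          simpa using hu.symm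
        have hv : d * u ≠ 0 := mul_ne_zero hd hun
        refine ⟨wOne K, Or.inr (Or.inl rfl), dElt u hun, dElt_mem _ _, dElt (d*u)⁻¹
          (inv_ne_zero hv), dElt_mem _ _, ?_⟩
        have hu2 : u ^ 2 * d = b := by field_simp at hu; linear_combination hu
        ext i j
        fin_cases i <;> fin_cases j <;>
          simp only [Matrix.SpecialLinearGroup.coe_mul] <;>
          simp [dElt, wOne, Matrix.mul_apply, Fin.sum_univ_two, ← ha', ← hb', ← hc', ← hd', ha] <;>
          (try field_simp) <;>
          first
            | linear_combination hu2
            | linear_combination -hu2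
            | linear_combination (-1 - d) * hu2 + b * hbc
            | linear_combination (c - d) * hu2 + (1 + b) * hbc
            | linear_combination d * hu2 - b * hbc
            | linear_combination c * hu2 + hbc
    · by_cases hc : c = 0
      · by_cases hb : b = 0
        · -- identity case
          refine ⟨1, Or.inr (Or.inr (Or.inr (Or.inr rfl))), A,
            ⟨by rw [← hb']; exact hb, by rw [← hc']; exact hc⟩, 1,
            ⟨by simp, by simp⟩, by rw [mul_one, mul_one]⟩
        · -- uOne case
          have had : a * d = 1 := by rw [hc] at hdet; linear_combination hdet
          obtain ⟨u, hu⟩ := IsAlgClosed.exists_pow_nat_eq (a * b) zero_lt_two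
          have hun : u ≠ 0 := by
            intro h
            rw [h] at hu
            have h0 : (0 : K) = a * b := by simpa using hu
            rcases mul_eq_zero.1 h0.symm with h | h
            exacts [ha h, hb h]
          refine ⟨uOne K, Or.inr (Or.inr (Or.inr (Or.inl rfl))), dElt u hun, dElt_mem _ _,
            dElt (a / u) (div_ne_zero ha hun), dElt_mem _ _, ?_⟩
          have hu2 : u ^ 2 = a * b := hu
          ext i j
          fin_cases i <;> fin_cases j <;>
            simp only [Matrix.SpecialLinearGroup.coe_mul] <;>
            simp [dElt, uOne, Matrix.mul_apply, Fin.sum_univ_two, ← ha', ← hb', ← hc', ← hd',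
              hc] <;>
            field_simp <;>
            first
              | linear_combination hu2
              | linear_combination -hu2
              | linear_combination had
              | linear_combination -had
      · -- gMat case
        obtain ⟨v, hv⟩ := IsAlgClosed.exists_pow_nat_eq (a * c) zero_lt_two
        have hv2 : v ^ 2 = a * c := hv
        have hvn : v ≠ 0 := by
          intro h; rw [h] at hv2
          exact (mul_ne_zero ha hc) (by linear_combination -hv2)
        refine ⟨gMat (b * c), Or.inl ⟨b * c, rfl⟩, dElt (a / v) (div_ne_zero ha hvn),
          dElt_mem _ _, dElt v hvn, dElt_mem _ _, ?_⟩
        ext i j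
        fin_cases i <;> fin_cases j <;>
          simp only [Matrix.SpecialLinearGroup.coe_mul] <;>
          simp [dElt, gMat, Matrix.mul_apply, Fin.sum_univ_two, ← ha', ← hb', ← hc', ← hd'] <;>
          field_simp <;>
          first
            | linear_combination b * hv2
            | linear_combination -hv2
            | linear_combination v * hdet
            | linear_combination (1 - v) * hdet
            | linear_combination hdet
  -- uniqueness
  obtain ⟨h, hmem, hrep⟩ := hex
  refine ⟨h, ⟨hmem, hrep⟩, ?_⟩
  rintro h' ⟨hmem', s₁, hs₁, s₂, hs₂, hA'⟩
  obtain ⟨t₁, ht₁, t₂, ht₂, hA⟩ := hrep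
  have I := invariants h t₁ t₂ ht₁ ht₂
  have I' := invariants h' s₁ s₂ hs₁ hs₂
  rw [← hA] at I
  rw [← hA'] at I'
  refine sep h' h hmem' hmem ?_ ?_ ?_ ?_ ?_
  · rw [← (I'.1 0 0), ← (I.1 0 0)]
  · rw [← (I'.1 0 1), ← (I.1 0 1)]
  · rw [← (I'.1 1 0), ← (I.1 1 0)]
  · rw [← (I'.1 1 1), ← (I.1 1 1)]
  · rw [← I'.2, ← I.2]
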